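/- In a regular topological space, every countable discrete subspace is strongly discrete: its points can be separated by pairwise disjoint open sets. -/
import Mathlib


theorem countable_discrete_strongly_discrete {X : Type*} [TopologicalSpace X] [T3Space X]
    (D : Set X) (hcnt : D.Countable) (hdisc : DiscreteTopology D) :
    ∃ U : X → Set X, (∀ d ∈ D, IsOpen (U d) ∧ d ∈ U d) ∧ D.PairwiseDisjoint U := by
  rcases D.eq_empty_or_nonempty with rfl | hne
  · exact ⟨fun _ => ∅, by simp, by simp⟩
  obtain ⟨f, hf⟩ := Set.Countable.exists_eq_range hcnt hne
  have hfD : ∀ n, f n ∈ D := fun n => hf ▸ Set.mem_range_self n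
  -- discrete: for each n, an open V n isolating f n in D
  have hV : ∀ n : ℕ, ∃ V : Set X, IsOpen V ∧ f n ∈ V ∧ V ∩ D ⊆ {f n} := by
    intro n
    have h1 : IsOpen ({(⟨f n, hfD n⟩ : D)} : Set D) := isOpen_discrete _
    obtain ⟨t, ht, hts⟩ := isOpen_induced_iff.mp h1
    refine ⟨t, ht, ?_, ?_⟩
    · have : (⟨f n, hfD n⟩ : D) ∈ (Subtype.val ⁻¹' t : Set D) := by
        rw [hts]; rfl
      exact this
    · rintro y ⟨hyt, hyD⟩
      have : (⟨y, hyD⟩ : D) ∈ (Subtype.val ⁻¹' t : Set D) := hyt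
      rw [hts] at this
      simpa using congrArg Subtype.val this
  choose V hVopen hVmem hVint using hV
  -- regularity: open W n with closure W n ⊆ V n
  have hW : ∀ n : ℕ, ∃ W : Set X, IsOpen W ∧ f n ∈ W ∧ closure W ⊆ V n := by
    intro n
    obtain ⟨t, htn, htc, hts⟩ := exists_mem_nhds_isClosed_subset
      ((hVopen n).mem_nhds (hVmem n))
    refine ⟨interior t, isOpen_interior, mem_interior_iff_mem_nhds.mpr htn, ?_⟩
    calc closure (interior t) ⊆ closure t := closure_mono interior_subset
      _ = t := htc.closure_eq
      _ ⊆ V n := hts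
  choose W hWopen hWmem hWcl using hW
  -- index function
  set g : X → ℕ := fun x => sInf {n | f n = x} with hg
  have hgf : ∀ x ∈ D, f (g x) = x := by
    intro x hx
    have : ∃ n, f n = x := by rwa [hf, Set.mem_range] at hx
    exact Nat.sInf_mem this
  have hgle : ∀ x m, f m = x → g x ≤ m := fun x m h => Nat.sInf_le h
  -- the separating family
  set U : X → Set X := fun x => W (g x) \ ⋃ m ∈ Finset.range (g x), closure (W m) with hU
  have hUopen : ∀ x, IsOpen (U x) := by
    intro x
    exact (hWopen _).sdiff (isClosed_biUnion_finset fun m _ => isClosed_closure)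
  have hUsub : ∀ x, U x ⊆ W (g x) := fun x => Set.diff_subset
  have hUmem : ∀ x ∈ D, x ∈ U x := by
    intro x hx
    refine ⟨by have := hWmem (g x); rwa [hgf x hx] at this, ?_⟩
    simp only [Set.mem_iUnion, not_exists]
    intro m hm hxm
    have hmem : x ∈ V m := hWcl m hxm
    have : x = f m := hVint m ⟨hmem, hx⟩
    have := hgle x m this.symm
    simp only [Finset.mem_range] at hm
    omega
  refine ⟨U, fun d hd => ⟨hUopen d, hUmem d hd⟩, ?_⟩
  intro x hx y hy hxy
  have hgxy : g x ≠ g y := by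
    intro h
    apply hxy
    rw [← hgf x hx, ← hgf y hy, h]
  -- wlog via symmetric argument
  have key : ∀ a b : X, g a < g b → Disjoint (U a) (U b) := by
    intro a b hab
    refine Set.disjoint_left.mpr ?_
    intro z hza hzb
    have hz1 : z ∈ closure (W (g a)) := subset_closure (hUsub a hza)
    have hz2 : z ∉ closure (W (g a)) := by
      have := hzb.2
      simp only [Set.mem_iUnion, not_exists] at this
      exact this (g a) (Finset.mem_range.mpr hab)
    exact hz2 hz1
  rcases lt_or_gt_of_ne hgxy with h | h
  · exact key x y h
  · exact (key y x h).symm
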